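/- If (x, y, B, k) is a digital anomaly, then for any positive integers t, m, n with m > n and gcd(m, n) = 1 satisfying x = t·m·(m − n)², y² = t·n·(m − n)², and B^(2k) = m²·t·n, we have B^k < mn/(m − n)² ≤ B^(k+1) (as an inequality of rational numbers). -/

import Mathlib

/-- Positive integers (x, y, B, k) form a digital anomaly if x/y = y + x/B^k
as rational numbers, B ≥ 2, and B^(k-1) ≤ x < B^k. -/
def IsDigitalAnomaly (x y B k : ℕ) : Prop :=
  0 < x ∧ 0 < y ∧ 2 ≤ B ∧ 0 < k ∧
    (x : ℚ) / y = y + x / B ^ k ∧ B ^ (k - 1) ≤ x ∧ x < B ^ k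

/-- For a digital anomaly with parameters (t, m, n),
B^k < mn/(m − n)² ≤ B^(k+1) as rational numbers. -/
theorem digitalAnomaly_k_bounds (x y B k : ℕ) (h : IsDigitalAnomaly x y B k)
    (t m n : ℕ) (ht : 0 < t) (hm : 0 < m) (hn : 0 < n)
    (hmn : n < m) (hcop : Nat.Coprime m n)
    (hxe : x = t * m * (m - n) ^ 2)
    (hye : y ^ 2 = t * n * (m - n) ^ 2)
    (hBe : B ^ (2 * k) = m ^ 2 * t * n) :
    (B : ℚ) ^ k < (m * n : ℚ) / ((m : ℚ) - n) ^ 2 ∧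
      (m * n : ℚ) / ((m : ℚ) - n) ^ 2 ≤ (B : ℚ) ^ (k + 1) := by
  obtain ⟨hx, hy, hB, hk, heq, hlo, hhi⟩ := h
  have key : x * (m * n) = B ^ (2 * k) * (m - n) ^ 2 := by
    rw [hxe, hBe]; ring
  have hcast : ((m - n : ℕ) : ℚ) = (m : ℚ) - n := by
    exact_mod_cast Nat.cast_sub hmn.le
  have hdpos : (0 : ℚ) < ((m : ℚ) - n) ^ 2 := by
    have : (0 : ℚ) < (m : ℚ) - n := by
      rw [← hcast]; exact_mod_cast Nat.sub_pos_of_lt hmn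
    positivity
  have hxQ : (0 : ℚ) < (x : ℚ) := by exact_mod_cast hx
  have hq : (m * n : ℚ) / ((m : ℚ) - n) ^ 2 = (B : ℚ) ^ (2 * k) / x := by
    rw [div_eq_div_iff hdpos.ne' hxQ.ne', ← hcast]
    have key' : ((x * (m * n) : ℕ) : ℚ) = ((B ^ (2 * k) * (m - n) ^ 2 : ℕ) : ℚ) := by
      exact_mod_cast congrArg (Nat.cast (R := ℚ)) key
    push_cast at key'
    linear_combination key'
  constructor
  · rw [hq, lt_div_iff₀ hxQ]
    have h1 : B ^ k * x < B ^ (2 * k) := by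
      calc B ^ k * x < B ^ k * B ^ k :=
            mul_lt_mul_of_pos_left hhi (Nat.pow_pos (by omega))
        _ = B ^ (2 * k) := by rw [← pow_add]; ring_nf
    exact_mod_cast h1
  · rw [hq, div_le_iff₀ hxQ]
    have h2 : B ^ (2 * k) ≤ B ^ (k + 1) * x := by
      calc B ^ (2 * k) = B ^ (k + 1) * B ^ (k - 1) := by
            rw [← pow_add]; congr 1; omega
        _ ≤ B ^ (k + 1) * x := Nat.mul_le_mul_left _ hlo
    exact_mod_cast h2
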